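/- Let z, z' be vectors in R^A (A a finite nonempty set), and let P = Softmax(z), Q = Softmax(z') be the probability distributions with P(a) = exp(z_a)/Σ_{a'} exp(z_{a'}) and similarly for Q. Then the KL divergence satisfies KL(P‖Q) ≤ (1/2)·‖z − z'‖_∞². -/

import Mathlib

open Real Finset

noncomputable def softmax {A : Type*} [Fintype A] (z : A → ℝ) : A → ℝ :=
  fun a => Real.exp (z a) / ∑ a', Real.exp (z a')

noncomputable def klDiv {A : Type*} [Fintype A] (P Q : A → ℝ) : ℝ :=
  ∑ a, P a * Real.log (P a / Q a)

theorem kl_softmax_le_half_sq_linf {A : Type*} [Fintype A] [Nonempty A]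
    (z z' : A → ℝ) :
    klDiv (softmax z) (softmax z') ≤ (1 / 2) * ‖z - z'‖ ^ 2 := by
  set d : A → ℝ := fun a => z a - z' a with hd
  set ε : ℝ := ‖z - z'‖ with hε
  have hdε : ∀ a, |d a| ≤ ε := by
    intro a
    have := norm_le_pi_norm (z - z') a
    simpa [Real.norm_eq_abs, hd] using this
  set S : ℝ → ℝ := fun t => ∑ a, Real.exp (z' a + t * d a) with hS
  set S₁ : ℝ → ℝ := fun t => ∑ a, d a * Real.exp (z' a + t * d a) with hS₁
  set S₂ : ℝ → ℝ := fun t => ∑ a, d a ^ 2 * Real.exp (z' a + t * d a) with hS₂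
  have hSpos : ∀ t, 0 < S t := fun t =>
    Finset.sum_pos (fun a _ => Real.exp_pos _) Finset.univ_nonempty
  have hlin : ∀ (a : A) (t : ℝ), HasDerivAt (fun t : ℝ => z' a + t * d a) (d a) t := by
    intro a t
    simpa using ((hasDerivAt_id t).mul_const (d a)).const_add (z' a)
  have hSd : ∀ t, HasDerivAt S (S₁ t) t := by
    intro t
    apply HasDerivAt.fun_sum
    intro a _
    simpa [mul_comm] using (hlin a t).exp
  have hS₁d : ∀ t, HasDerivAt S₁ (S₂ t) t := by
    intro t
    apply HasDerivAt.fun_sum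
    intro a _
    have := ((hlin a t).exp).const_mul (d a)
    simpa [pow_two, mul_comm, mul_assoc, mul_left_comm] using this
  have hS₂le : ∀ t, S₂ t ≤ ε ^ 2 * S t := by
    intro t
    rw [hS₂, hS, Finset.mul_sum]
    apply Finset.sum_le_sum
    intro a _
    have h1 : d a ^ 2 ≤ ε ^ 2 := by
      have := sq_le_sq' (neg_le_of_abs_le (hdε a)) (le_of_abs_le (hdε a))
      simpa using this
    exact mul_le_mul_of_nonneg_right h1 (Real.exp_pos _).le
  set F : ℝ → ℝ := fun t =>
    Real.log (S t) - Real.log (S 1) - S₁ 1 / S 1 * (t - 1) - ε ^ 2 / 2 * (t - 1) ^ 2 with hF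
  set F' : ℝ → ℝ := fun t => S₁ t / S t - S₁ 1 / S 1 - ε ^ 2 * (t - 1) with hF'
  have hFd : ∀ t, HasDerivAt F (F' t) t := by
    intro t
    have h1 : HasDerivAt (fun t => Real.log (S t)) (S₁ t / S t) t :=
      (hSd t).log (hSpos t).ne'
    have h2 : HasDerivAt (fun t : ℝ => S₁ 1 / S 1 * (t - 1)) (S₁ 1 / S 1) t := by
      simpa using ((hasDerivAt_id t).sub_const 1).const_mul (S₁ 1 / S 1)
    have h3 : HasDerivAt (fun t : ℝ => ε ^ 2 / 2 * (t - 1) ^ 2) (ε ^ 2 * (t - 1)) t := by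
      have h := (((hasDerivAt_id t).sub_const 1).pow 2).const_mul (ε ^ 2 / 2)
      refine h.congr_deriv ?_
      simp only [id_eq]
      ring
    exact (((h1.sub_const (Real.log (S 1))).sub h2).sub h3)
  have hF'd : ∀ t, HasDerivAt F' ((S₂ t * S t - S₁ t * S₁ t) / S t ^ 2 - ε ^ 2) t := by
    intro t
    have hq : HasDerivAt (fun t => S₁ t / S t)
        ((S₂ t * S t - S₁ t * S₁ t) / S t ^ 2) t :=
      (hS₁d t).div (hSd t) (hSpos t).ne'
    have hl : HasDerivAt (fun t : ℝ => ε ^ 2 * (t - 1)) (ε ^ 2) t := by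
      simpa using ((hasDerivAt_id t).sub_const 1).const_mul (ε ^ 2)
    exact (hq.sub_const (S₁ 1 / S 1)).sub hl
  have hkey : ∀ t, (S₂ t * S t - S₁ t * S₁ t) / S t ^ 2 - ε ^ 2 ≤ 0 := by
    intro t
    rw [sub_nonpos, div_le_iff₀ (by positivity : (0 : ℝ) < S t ^ 2)]
    nlinarith [hS₂le t, mul_self_nonneg (S₁ t), (hSpos t).le]
  have hanti : Antitone F' :=
    antitone_of_deriv_nonpos (fun t => (hF'd t).differentiableAt)
      (fun t => by rw [(hF'd t).deriv]; exact hkey t)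
  have hF'1 : F' 1 = 0 := by simp only [hF']; ring
  have hFdiff : Differentiable ℝ F := fun t => (hFd t).differentiableAt
  have hmono : MonotoneOn F (Set.Icc (0 : ℝ) 1) := by
    apply monotoneOn_of_deriv_nonneg (convex_Icc 0 1)
    · exact hFdiff.continuous.continuousOn
    · exact fun t _ => (hFdiff t).differentiableWithinAt
    · intro t ht
      rw [interior_Icc] at ht
      rw [(hFd t).deriv]
      have h := hanti ht.2.le
      rw [hF'1] at h
      linarith
  have hF0 : F 0 ≤ F 1 := hmono (by norm_num) (by norm_num) zero_le_one
  have hF1 : F 1 = 0 := by simp only [hF]; ring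
  have h0 : F 0 = Real.log (S 0) - Real.log (S 1) + S₁ 1 / S 1 - ε ^ 2 / 2 := by
    simp only [hF]; ring
  have hmain : Real.log (S 0) - Real.log (S 1) + S₁ 1 / S 1 ≤ ε ^ 2 / 2 := by
    rw [h0, hF1] at hF0
    linarith
  have hz : ∀ a, z' a + (1 : ℝ) * d a = z a := by intro a; simp [hd]
  have hz0 : ∀ a, z' a + (0 : ℝ) * d a = z' a := by intro a; simp
  have hS1 : S 1 = ∑ a, Real.exp (z a) := by
    rw [hS]; exact Finset.sum_congr rfl fun a _ => by rw [hz a]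
  have hS0 : S 0 = ∑ a, Real.exp (z' a) := by
    rw [hS]; exact Finset.sum_congr rfl fun a _ => by rw [hz0 a]
  have hS11 : S₁ 1 = ∑ a, d a * Real.exp (z a) := by
    rw [hS₁]; exact Finset.sum_congr rfl fun a _ => by rw [hz a]
  have hsumz : (0 : ℝ) < ∑ a, Real.exp (z a) :=
    Finset.sum_pos (fun a _ => Real.exp_pos _) Finset.univ_nonempty
  have hsumz' : (0 : ℝ) < ∑ a, Real.exp (z' a) :=
    Finset.sum_pos (fun a _ => Real.exp_pos _) Finset.univ_nonempty
  have hKL : klDiv (softmax z) (softmax z') =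
      S₁ 1 / S 1 + (Real.log (S 0) - Real.log (S 1)) := by
    have hterm : ∀ a : A, softmax z a * Real.log (softmax z a / softmax z' a)
        = d a * Real.exp (z a) / (∑ a', Real.exp (z a'))
          + softmax z a *
            (Real.log (∑ a', Real.exp (z' a')) - Real.log (∑ a', Real.exp (z a'))) := by
      intro a
      have hp : (0 : ℝ) < softmax z a := div_pos (Real.exp_pos _) hsumz
      have hq : (0 : ℝ) < softmax z' a := div_pos (Real.exp_pos _) hsumz'
      rw [Real.log_div hp.ne' hq.ne']
      have h1 : Real.log (softmax z a) = z a - Real.log (∑ a', Real.exp (z a')) := by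
        simp only [softmax]
        rw [Real.log_div (Real.exp_ne_zero _) hsumz.ne', Real.log_exp]
      have h2 : Real.log (softmax z' a) = z' a - Real.log (∑ a', Real.exp (z' a')) := by
        simp only [softmax]
        rw [Real.log_div (Real.exp_ne_zero _) hsumz'.ne', Real.log_exp]
      rw [h1, h2]
      simp only [softmax, hd]
      ring
    have hone : ∑ a, softmax z a = 1 := by
      simp only [softmax]
      rw [← Finset.sum_div, div_self hsumz.ne']
    rw [klDiv]
    rw [Finset.sum_congr rfl fun a _ => hterm a]
    rw [Finset.sum_add_distrib, ← Finset.sum_mul, hone, one_mul, hS11, hS1, hS0,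
      Finset.sum_div]
  rw [hKL]
  have hfin : ε ^ 2 / 2 = 1 / 2 * ‖z - z'‖ ^ 2 := by rw [hε]; ring
  linarith [hmain]
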